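/- arXiv:2504.20644 — 2 statements merged into one kernel-verified Lean document; each statement's English description precedes it below -/
import Mathlib

section
/- Let f: 2^Ω → ℝ be a non-negative monotone γ-weakly submodular function with f(∅) = 0, on a finite ground set Ω, and let k ≥ 1. Let G_k be the set selected by the greedy algorithm that starts from ∅ and at each of k steps adds an element maximizing the marginal gain. Then f(G_k) ≥ (1 - e^{-γ}) · max_{|S| ≤ k} f(S). -/
theorem stmt_7 (Ω : Type*) [Fintype Ω] [DecidableEq Ω] (f : Finset Ω → ℝ) (γ : ℝ)
    (hγ0 : 0 < γ) (hγ1 : γ ≤ 1)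
    (hnonneg : ∀ A : Finset Ω, 0 ≤ f A)
    (hmono : ∀ A B : Finset Ω, A ⊆ B → f A ≤ f B)
    (hempty : f ∅ = 0)
    (hweak : ∀ A B : Finset Ω, ∀ x : Ω, A ⊆ B → x ∉ B →
      f (insert x A) - f A ≥ γ * (f (insert x B) - f B))
    (k : ℕ) (hk : 1 ≤ k)
    (G : ℕ → Finset Ω) (hG0 : G 0 = ∅)
    (hgreedy : ∀ t < k, ∃ x ∉ G t, G (t + 1) = insert x (G t) ∧
      ∀ y ∉ G t, f (insert y (G t)) ≤ f (insert x (G t))) :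
    ∀ S : Finset Ω, S.card ≤ k → (1 - Real.exp (-γ)) * f S ≤ f (G k) := by
  intro S hS
  have hkpos : (0:ℝ) < (k:ℝ) := by exact_mod_cast hk
  -- sum lemma
  have hsum : ∀ T A : Finset Ω, γ * (f (T ∪ A) - f A) ≤ ∑ x ∈ T, (f (insert x A) - f A) := by
    intro T
    induction T using Finset.induction_on with
    | empty => intro A; simp
    | @insert x T' hx ih =>
      intro A
      rw [Finset.sum_insert hx, Finset.insert_union]
      have ih' := ih A
      by_cases hxA : x ∈ A
      · have h1 : insert x (T' ∪ A) = T' ∪ A := by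
          apply Finset.insert_eq_self.mpr; exact Finset.mem_union_right _ hxA
        have h2 : insert x A = A := Finset.insert_eq_self.mpr hxA
        rw [h1, h2]
        linarith
      · by_cases hxT : x ∈ T' ∪ A
        · have h1 : insert x (T' ∪ A) = T' ∪ A := Finset.insert_eq_self.mpr hxT
          rw [h1]
          have := hmono A (insert x A) (Finset.subset_insert _ _)
          linarith
        · have hw := hweak A (T' ∪ A) x (Finset.subset_union_right) hxT
          nlinarith
  -- step inequality
  have hstep : ∀ t < k, γ * (f S - f (G t)) ≤ (k:ℝ) * (f (G (t+1)) - f (G t)) := by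
    intro t ht
    obtain ⟨x, hxG, hGt1, hbest⟩ := hgreedy t ht
    have hδ0 : 0 ≤ f (G (t+1)) - f (G t) := by
      rw [hGt1]
      have := hmono (G t) (insert x (G t)) (Finset.subset_insert _ _)
      linarith
    have hterm : ∀ y ∈ S, f (insert y (G t)) - f (G t) ≤ f (G (t+1)) - f (G t) := by
      intro y hy
      by_cases hyG : y ∈ G t
      · rw [Finset.insert_eq_self.mpr hyG]; linarith
      · rw [hGt1]; have := hbest y hyG; linarith
    have h1 : γ * (f (S ∪ G t) - f (G t)) ≤ ∑ x ∈ S, (f (insert x (G t)) - f (G t)) :=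
      hsum S (G t)
    have h2 : ∑ x ∈ S, (f (insert x (G t)) - f (G t)) ≤
        (S.card : ℝ) * (f (G (t+1)) - f (G t)) := by
      calc ∑ x ∈ S, (f (insert x (G t)) - f (G t))
          ≤ ∑ _x ∈ S, (f (G (t+1)) - f (G t)) := Finset.sum_le_sum hterm
        _ = (S.card : ℝ) * (f (G (t+1)) - f (G t)) := by
            rw [Finset.sum_const, nsmul_eq_mul]
    have h3 : (S.card : ℝ) * (f (G (t+1)) - f (G t)) ≤
        (k:ℝ) * (f (G (t+1)) - f (G t)) := by
      apply mul_le_mul_of_nonneg_right _ hδ0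
      exact_mod_cast hS
    have h4 : f S ≤ f (S ∪ G t) := hmono _ _ Finset.subset_union_left
    nlinarith
  -- recursion
  set c : ℝ := 1 - γ / (k:ℝ) with hc
  have hc0 : 0 ≤ c := by
    have : γ / (k:ℝ) ≤ 1 := by
      rw [div_le_one hkpos]
      have : (1:ℝ) ≤ (k:ℝ) := by exact_mod_cast hk
      linarith
    simp [hc]; linarith
  have key : ∀ t, t ≤ k → f S - f (G t) ≤ c ^ t * f S := by
    intro t
    induction t with
    | zero => intro _; rw [hG0, hempty]; simp
    | succ t ih =>
      intro ht
      have ht' : t < k := ht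
      have ihh := ih (le_of_lt ht')
      have hst := hstep t ht'
      have hd : γ / (k:ℝ) * (f S - f (G t)) ≤ f (G (t + 1)) - f (G t) := by
        rw [div_mul_eq_mul_div, div_le_iff₀ hkpos]
        linarith [hst]
      have hexp : c * (f S - f (G t)) =
          (f S - f (G t)) - γ / (k:ℝ) * (f S - f (G t)) := by rw [hc]; ring
      have : f S - f (G (t+1)) ≤ c * (f S - f (G t)) := by
        rw [hexp]; linarith
      calc f S - f (G (t+1)) ≤ c * (f S - f (G t)) := this
        _ ≤ c * (c ^ t * f S) := mul_le_mul_of_nonneg_left ihh hc0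
        _ = c ^ (t+1) * f S := by ring
  have hkey := key k le_rfl
  -- c^k ≤ exp(-γ)
  have hce : c ≤ Real.exp (-(γ / (k:ℝ))) := by
    have := Real.add_one_le_exp (-(γ / (k:ℝ)))
    linarith
  have hpow : c ^ k ≤ Real.exp (-γ) := by
    calc c ^ k ≤ (Real.exp (-(γ / (k:ℝ)))) ^ k := pow_le_pow_left₀ hc0 hce k
      _ = Real.exp ((k:ℝ) * (-(γ / (k:ℝ)))) := by rw [← Real.exp_nat_mul]
      _ = Real.exp (-γ) := by
          congr 1
          field_simp
  have hfS : 0 ≤ f S := hnonneg S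
  have : c ^ k * f S ≤ Real.exp (-γ) * f S := mul_le_mul_of_nonneg_right hpow hfS
  nlinarith
end

section
/- Let f: 2^Ω → ℝ be a non-negative monotone submodular function with f(∅)=0 on a finite ground set Ω, and let G_k be the greedy solution after k steps. Then f(G_k) ≥ (1 - (1 - 1/k)^k) · max_{|S| ≤ k} f(S) ≥ (1 - 1/e) · max_{|S| ≤ k} f(S). -/
theorem stmt_8 (Ω : Type*) [Fintype Ω] [DecidableEq Ω] (f : Finset Ω → ℝ)
    (hnonneg : ∀ A : Finset Ω, 0 ≤ f A)
    (hmono : ∀ A B : Finset Ω, A ⊆ B → f A ≤ f B)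
    (hempty : f ∅ = 0)
    (hsub : ∀ A B : Finset Ω, ∀ x : Ω, A ⊆ B → x ∉ B →
      f (insert x A) - f A ≥ f (insert x B) - f B)
    (k : ℕ) (hk : 1 ≤ k)
    (G : ℕ → Finset Ω) (hG0 : G 0 = ∅)
    (hgreedy : ∀ t < k, ∃ x ∉ G t, G (t + 1) = insert x (G t) ∧
      ∀ y ∉ G t, f (insert y (G t)) ≤ f (insert x (G t))) :
    ∀ S : Finset Ω, S.card ≤ k →
      (1 - (1 - 1 / (k : ℝ)) ^ k) * f S ≤ f (G k) ∧
      (1 - 1 / Real.exp 1) * f S ≤ (1 - (1 - 1 / (k : ℝ)) ^ k) * f S := by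
  have kpos : (0:ℝ) < (k:ℝ) := by exact_mod_cast Nat.lt_of_lt_of_le Nat.zero_lt_one hk
  have hk1 : (1:ℝ) ≤ (k:ℝ) := by exact_mod_cast hk
  have hbase : (0:ℝ) ≤ 1 - 1/(k:ℝ) := by
    have : 1/(k:ℝ) ≤ 1 := by
      rw [div_le_one kpos]; exact hk1
    linarith
  -- submodular expansion lemma
  have expand : ∀ (A T : Finset Ω), f (A ∪ T) ≤ f A + ∑ x ∈ T, (f (insert x A) - f A) := by
    intro A T
    induction T using Finset.induction_on with
    | empty => simp
    | @insert a s hx ih =>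
      rw [Finset.union_insert, Finset.sum_insert hx]
      by_cases ha : a ∈ A ∪ s
      · have heq : insert a (A ∪ s) = A ∪ s := Finset.insert_eq_self.mpr ha
        rw [heq]
        have hterm : 0 ≤ f (insert a A) - f A :=
          sub_nonneg.mpr (hmono _ _ (Finset.subset_insert _ _))
        linarith
      · have h := hsub A (A ∪ s) a Finset.subset_union_left ha
        linarith
  intro S hS
  have hScard : (S.card : ℝ) ≤ (k : ℝ) := by exact_mod_cast hS
  -- one greedy step
  have step : ∀ t < k, f S - f (G (t+1)) ≤ (1 - 1/(k:ℝ)) * (f S - f (G t)) := by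
    intro t ht
    obtain ⟨x, hxG, hG1, hmax⟩ := hgreedy t ht
    have hsubset : G t ⊆ G (t+1) := by rw [hG1]; exact Finset.subset_insert _ _
    have hΔ : 0 ≤ f (G (t+1)) - f (G t) := sub_nonneg.mpr (hmono _ _ hsubset)
    have hterm : ∀ y ∈ S, f (insert y (G t)) - f (G t) ≤ f (G (t+1)) - f (G t) := by
      intro y _
      by_cases hy : y ∈ G t
      · rw [Finset.insert_eq_self.mpr hy]; linarith
      · have := hmax y hy
        rw [hG1]
        linarith
    have hsum : ∑ y ∈ S, (f (insert y (G t)) - f (G t)) ≤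
        (S.card : ℝ) * (f (G (t+1)) - f (G t)) := by
      calc ∑ y ∈ S, (f (insert y (G t)) - f (G t))
          ≤ ∑ _y ∈ S, (f (G (t+1)) - f (G t)) := Finset.sum_le_sum hterm
        _ = (S.card : ℝ) * (f (G (t+1)) - f (G t)) := by
            rw [Finset.sum_const, nsmul_eq_mul]
    have h1 : f S ≤ f (G t ∪ S) := hmono _ _ Finset.subset_union_right
    have h2 := expand (G t) S
    have h3 : (S.card : ℝ) * (f (G (t+1)) - f (G t)) ≤ (k:ℝ) * (f (G (t+1)) - f (G t)) :=
      mul_le_mul_of_nonneg_right hScard hΔ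
    have key : f S - f (G t) ≤ (k:ℝ) * (f (G (t+1)) - f (G t)) := by linarith
    have hdiv : (f S - f (G t)) / (k:ℝ) ≤ f (G (t+1)) - f (G t) := by
      rw [div_le_iff₀ kpos]
      nlinarith
    have : (1 - 1/(k:ℝ)) * (f S - f (G t)) = (f S - f (G t)) - (f S - f (G t)) / (k:ℝ) := by
      field_simp
    rw [this]
    linarith
  -- induction
  have main : ∀ t, t ≤ k → f S - f (G t) ≤ (1 - 1/(k:ℝ))^t * f S := by
    intro t
    induction t with
    | zero => intro _; rw [hG0, hempty]; simp
    | succ n ih =>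
      intro hn
      have hnk : n < k := hn
      have h1 := step n hnk
      have h2 := ih (Nat.le_of_lt hnk)
      calc f S - f (G (n+1)) ≤ (1 - 1/(k:ℝ)) * (f S - f (G n)) := h1
        _ ≤ (1 - 1/(k:ℝ)) * ((1 - 1/(k:ℝ))^n * f S) := mul_le_mul_of_nonneg_left h2 hbase
        _ = (1 - 1/(k:ℝ))^(n+1) * f S := by ring
  have first : (1 - (1 - 1/(k:ℝ))^k) * f S ≤ f (G k) := by
    have := main k le_rfl
    nlinarith [hnonneg (G k)]
  refine ⟨first, ?_⟩
  have hSnn := hnonneg S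
  have hexp : (1 - 1/(k:ℝ))^k ≤ 1 / Real.exp 1 := by
    have h1 : 1 - 1/(k:ℝ) ≤ Real.exp (-(1/(k:ℝ))) := by
      have := Real.add_one_le_exp (-(1/(k:ℝ)))
      linarith
    have h2 : (1 - 1/(k:ℝ))^k ≤ (Real.exp (-(1/(k:ℝ))))^k :=
      pow_le_pow_left₀ hbase h1 k
    have h3 : (Real.exp (-(1/(k:ℝ))))^k = Real.exp ((k:ℝ) * (-(1/(k:ℝ)))) := by
      rw [← Real.exp_nat_mul]
    have h4 : (k:ℝ) * (-(1/(k:ℝ))) = -1 := by field_simp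
    rw [h3, h4, Real.exp_neg] at h2
    simpa using h2
  have : (1 - 1 / Real.exp 1) ≤ (1 - (1 - 1/(k:ℝ))^k) := by linarith
  exact mul_le_mul_of_nonneg_right this hSnn
end
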